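/- Let d_1, ..., d_k ≥ 2 be integers with d_1 + ... + d_k = n + k for some n ≥ 1. For each j set h'_j = (d_1 - 1) + ... + (d_j - 1), so h'_0 = 0 and h'_k = n. Define d^{(i)}_j = 1 if h'_{j-1} < i ≤ h'_j and 0 otherwise, and a^{(i)} = Σ_{j'} d^{(i)}_{j'} · (d_{j'+1} ⋯ d_k). Define b^{(i)} = a^{(i)} + ... + a^{(n)} + 1 (with b^{(n+1)} = 1). Then for h'_{j-1} < i ≤ h'_j one has a^{(i)} = d_{j+1} ⋯ d_k and b^{(i)} = d_{j+1} ⋯ d_k · (h'_j + 2 - i), and min_{1 ≤ i ≤ n} b^{(i)}/b^{(i+1)} = min_{1 ≤ j ≤ k} d_j/(d_j - 1). -/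

import Mathlib

open Finset

/-- For integers `d 1, …, d k ≥ 2` with `∑ d j = n + k` (`n ≥ 1`), set
`h' j = (d 1 - 1) + ⋯ + (d j - 1)` (so `h' 0 = 0`, `h' k = n`), `dd i j = 1` if
`h' (j-1) < i ≤ h' j` and `0` otherwise, `a i = ∑_{j'} dd i j' * ∏_{j'' > j'} d j''`,
and `b i = a i + ⋯ + a n + 1` (`b (n+1) = 1`). Then for `h' (j-1) < i ≤ h' j` one has
`a i = ∏_{j''=j+1}^{k} d j''` and `b i = (∏_{j''=j+1}^{k} d j'') * (h' j + 2 - i)`, and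
`min_{1 ≤ i ≤ n} b i / b (i+1) = min_{1 ≤ j ≤ k} d j / (d j - 1)`. -/
theorem fano_complete_intersection_ratios (n k : ℕ) (hn : 1 ≤ n) (hk : 1 ≤ k)
    (d : ℕ → ℕ) (hd2 : ∀ j ∈ Icc 1 k, 2 ≤ d j) (hsum : ∑ j ∈ Icc 1 k, d j = n + k)
    (h' : ℕ → ℕ) (hh' : ∀ j, h' j = ∑ j' ∈ Icc 1 j, (d j' - 1))
    (dd : ℕ → ℕ → ℕ)
    (hdd : ∀ i j, dd i j = if h' (j - 1) < i ∧ i ≤ h' j then 1 else 0)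
    (a : ℕ → ℕ)
    (ha : ∀ i, a i = ∑ j' ∈ Icc 1 k, dd i j' * ∏ j'' ∈ Icc (j' + 1) k, d j'')
    (b : ℕ → ℕ) (hb : ∀ i ∈ Icc 1 n, b i = (∑ i' ∈ Icc i n, a i') + 1)
    (hb' : b (n + 1) = 1) :
    (∀ j ∈ Icc 1 k, ∀ i, h' (j - 1) < i → i ≤ h' j →
        a i = ∏ j'' ∈ Icc (j + 1) k, d j'' ∧
        b i = (∏ j'' ∈ Icc (j + 1) k, d j'') * (h' j + 2 - i)) ∧
      (Icc 1 n).inf' (by simp [hn]) (fun i => (b i : ℚ) / (b (i + 1) : ℚ)) =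
        (Icc 1 k).inf' (by simp [hk]) (fun j => (d j : ℚ) / ((d j : ℚ) - 1)) := by
  classical
  set P : ℕ → ℕ := fun j => ∏ j'' ∈ Icc (j + 1) k, d j'' with hP
  have h'0 : h' 0 = 0 := by simp [hh']
  have hstep : ∀ j, 1 ≤ j → h' j = h' (j - 1) + (d j - 1) := by
    intro j hj
    obtain ⟨m, rfl⟩ : ∃ m, j = m + 1 := ⟨j - 1, (Nat.succ_pred_eq_of_pos hj).symm⟩
    simp only [hh', Nat.add_sub_cancel]
    rw [Finset.sum_Icc_succ_top (by omega)]
  have hmono : ∀ j1 j2, j1 ≤ j2 → h' j1 ≤ h' j2 := by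
    intro j1 j2 h
    rw [hh', hh']
    exact Finset.sum_le_sum_of_subset (Finset.Icc_subset_Icc_right h)
  have hhk : h' k = n := by
    have h1 : ∑ j ∈ Icc 1 k, ((d j - 1) + 1) = ∑ j ∈ Icc 1 k, d j :=
      Finset.sum_congr rfl fun j hj => by have := hd2 j hj; omega
    rw [Finset.sum_add_distrib, Finset.sum_const, Nat.card_Icc, hsum] at h1
    simp only [smul_eq_mul, mul_one] at h1
    rw [hh']
    omega
  have hPpos : ∀ j, 0 < P j := by
    intro j
    apply Finset.prod_pos
    intro x hx
    rw [mem_Icc] at hx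
    have := hd2 x (mem_Icc.mpr ⟨by omega, hx.2⟩)
    omega
  have hPstep : ∀ j, 1 ≤ j → j ≤ k → P (j - 1) = d j * P j := by
    intro j hj1 hjk
    have heq : Icc (j - 1 + 1) k = insert j (Icc (j + 1) k) := by
      have : j - 1 + 1 = j := by omega
      rw [this, Finset.Icc_add_one_left_eq_Ioc, Finset.Ioc_insert_left hjk]
    rw [hP]
    simp only []
    rw [heq, Finset.prod_insert (by simp)]
  have hPk : P k = 1 := by
    simp [hP]
  -- block membership
  have hblock : ∀ i, 1 ≤ i → i ≤ n → ∃ j, 1 ≤ j ∧ j ≤ k ∧ h' (j - 1) < i ∧ i ≤ h' j := by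
    intro i h1 h2
    have hex : ∃ j, i ≤ h' j := ⟨k, by rw [hhk]; exact h2⟩
    refine ⟨Nat.find hex, ?_, ?_, ?_, Nat.find_spec hex⟩
    · by_contra h
      have hj0 : Nat.find hex = 0 := by omega
      have := Nat.find_spec hex
      rw [hj0, h'0] at this
      omega
    · exact Nat.find_min' hex (by rw [hhk]; exact h2)
    · have h1' : 1 ≤ Nat.find hex := by
        by_contra h
        have hj0 : Nat.find hex = 0 := by omega
        have := Nat.find_spec hex
        rw [hj0, h'0] at this
        omega
      have := Nat.find_min hex (show Nat.find hex - 1 < Nat.find hex by omega)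
      omega
  -- a on blocks
  have hA : ∀ j, 1 ≤ j → j ≤ k → ∀ i, h' (j - 1) < i → i ≤ h' j → a i = P j := by
    intro j hj1 hjk i hi1 hi2
    rw [ha]
    rw [Finset.sum_eq_single_of_mem j (mem_Icc.mpr ⟨hj1, hjk⟩)]
    · rw [hdd]
      simp [hi1, hi2, P]
    · intro j' hj' hne
      rw [hdd]
      have hco : ¬(h' (j' - 1) < i ∧ i ≤ h' j') := by
        rcases lt_or_gt_of_ne hne with h | h
        · rintro ⟨_, hle⟩
          have : h' j' ≤ h' (j - 1) := hmono _ _ (by omega)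
          omega
        · rintro ⟨hlt, _⟩
          have : h' j ≤ h' (j' - 1) := hmono _ _ (by omega)
          omega
      simp [hco]
  -- recursion for b
  have hbrec : ∀ i, 1 ≤ i → i ≤ n → b i = a i + b (i + 1) := by
    intro i h1 h2
    rw [hb i (mem_Icc.mpr ⟨h1, h2⟩)]
    rcases eq_or_lt_of_le h2 with rfl | h
    · rw [hb']
      simp
    · rw [hb (i + 1) (mem_Icc.mpr ⟨by omega, by omega⟩)]
      have heq : Icc i n = insert i (Icc (i + 1) n) := by
        rw [Finset.Icc_add_one_left_eq_Ioc, Finset.Ioc_insert_left h2]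
      rw [heq, Finset.sum_insert (by simp)]
      ring
  -- b on blocks, downward induction
  have hB : ∀ m i, i + m = n + 1 → ∀ j, 1 ≤ j → j ≤ k → h' (j - 1) < i → i ≤ h' j →
      b i = P j * (h' j + 2 - i) := by
    intro m
    induction m with
    | zero =>
      intro i hi j hj1 hjk hi1 hi2
      exfalso
      have := hmono j k hjk
      omega
    | succ m ih =>
      intro i hi j hj1 hjk hi1 hi2
      have hjn : h' j ≤ n := by rw [← hhk]; exact hmono j k hjk
      have hin : i ≤ n := le_trans hi2 hjn
      have hi1' : 1 ≤ i := by
        have : h' 0 ≤ h' (j - 1) := hmono _ _ (Nat.zero_le _)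
        omega
      rw [hbrec i hi1' hin, hA j hj1 hjk i hi1 hi2]
      rcases eq_or_lt_of_le hi2 with heq | hlt
      · -- i = h' j
        rcases eq_or_lt_of_le hjk with rfl | hjk'
        · -- j = k, i = n
          have hik : i = n := by omega
          rw [hik, hb', hPk]
          omega
        · have hd1 : h' (j + 1) = h' j + (d (j + 1) - 1) := by
            have := hstep (j + 1) (by omega)
            simpa using this
          have hd2' : 2 ≤ d (j + 1) := hd2 (j + 1) (mem_Icc.mpr ⟨by omega, by omega⟩)
          have hb1 : b (i + 1) = P (j + 1) * (h' (j + 1) + 2 - (i + 1)) := by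
            apply ih (i + 1) (by omega) (j + 1) (by omega) (by omega)
            · simpa using (by omega : h' j < i + 1)
            · omega
          have he : h' (j + 1) + 2 - (i + 1) = d (j + 1) := by omega
          have hPj : P j = P (j + 1) * d (j + 1) := by
            have := hPstep (j + 1) (by omega) (by omega)
            simp only [Nat.add_sub_cancel] at this
            rw [this]; ring
          rw [hb1, he, ← hPj]
          have he2 : h' j + 2 - i = 2 := by omega
          rw [he2]
          ring
      · -- i < h' j
        have hb1 : b (i + 1) = P j * (h' j + 2 - (i + 1)) :=
          ih (i + 1) (by omega) j hj1 hjk (by omega) (by omega)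
        rw [hb1]
        have e1 : h' j + 2 - (i + 1) = h' j + 1 - i := by omega
        have e2 : h' j + 2 - i = (h' j + 1 - i) + 1 := by omega
        rw [e1, e2, Nat.mul_succ]
        ring
  have hB' : ∀ j, 1 ≤ j → j ≤ k → ∀ i, h' (j - 1) < i → i ≤ h' j →
      b i = P j * (h' j + 2 - i) := by
    intro j hj1 hjk i hi1 hi2
    have hjn : h' j ≤ n := by rw [← hhk]; exact hmono j k hjk
    exact hB (n + 1 - i) i (by omega) j hj1 hjk hi1 hi2
  -- b at the successor
  have hBnext : ∀ j, 1 ≤ j → j ≤ k → ∀ i, h' (j - 1) < i → i ≤ h' j →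
      b (i + 1) = P j * (h' j + 1 - i) := by
    intro j hj1 hjk i hi1 hi2
    rcases eq_or_lt_of_le hi2 with heq | hlt
    · -- i = h' j
      have he : h' j + 1 - i = 1 := by omega
      rw [he, mul_one]
      rcases eq_or_lt_of_le hjk with rfl | hjk'
      · have hik : i = n := by omega
        rw [hik, hb', hPk]
      · have hd1 : h' (j + 1) = h' j + (d (j + 1) - 1) := by
          have := hstep (j + 1) (by omega)
          simpa using this
        have hd2' : 2 ≤ d (j + 1) := hd2 (j + 1) (mem_Icc.mpr ⟨by omega, by omega⟩)
        have hb1 : b (i + 1) = P (j + 1) * (h' (j + 1) + 2 - (i + 1)) := by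
          apply hB' (j + 1) (by omega) (by omega)
          · simpa using (by omega : h' j < i + 1)
          · omega
        have he2 : h' (j + 1) + 2 - (i + 1) = d (j + 1) := by omega
        have hPj : P j = P (j + 1) * d (j + 1) := by
          have := hPstep (j + 1) (by omega) (by omega)
          simp only [Nat.add_sub_cancel] at this
          rw [this]; ring
        rw [hb1, he2, ← hPj]
    · have := hB' j hj1 hjk (i + 1) (by omega) (by omega)
      rw [this]
      congr 1
      omega
  -- ratio formula
  have hratio : ∀ j, 1 ≤ j → j ≤ k → ∀ i, h' (j - 1) < i → i ≤ h' j →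
      (b i : ℚ) / (b (i + 1) : ℚ) =
        ((h' j + 2 - i : ℕ) : ℚ) / ((h' j + 1 - i : ℕ) : ℚ) := by
    intro j hj1 hjk i hi1 hi2
    rw [hB' j hj1 hjk i hi1 hi2, hBnext j hj1 hjk i hi1 hi2]
    push_cast [Nat.cast_mul]
    rw [mul_div_mul_left]
    exact_mod_cast (hPpos j).ne'
  constructor
  · intro j hj i hi1 hi2
    rw [mem_Icc] at hj
    exact ⟨hA j hj.1 hj.2 i hi1 hi2, hB' j hj.1 hj.2 i hi1 hi2⟩
  · apply le_antisymm
    · -- inf over i ≤ inf over j : witness i = h'(j-1)+1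
      apply Finset.le_inf'
      intro j hj
      rw [mem_Icc] at hj
      have hdj := hd2 j (mem_Icc.mpr hj)
      have hst := hstep j hj.1
      have hjn : h' j ≤ n := by rw [← hhk]; exact hmono j k hj.2
      set i := h' (j - 1) + 1 with hi
      have hi1 : h' (j - 1) < i := by omega
      have hi2 : i ≤ h' j := by omega
      have hmem : i ∈ Icc 1 n := mem_Icc.mpr ⟨by omega, by omega⟩
      refine le_trans (Finset.inf'_le _ hmem) ?_
      rw [hratio j hj.1 hj.2 i hi1 hi2]
      have e1 : h' j + 2 - i = d j := by omega
      have e2 : h' j + 1 - i = d j - 1 := by omega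
      rw [e1, e2]
      have : ((d j - 1 : ℕ) : ℚ) = (d j : ℚ) - 1 := by
        push_cast [Nat.cast_sub (by omega : 1 ≤ d j)]
        ring
      rw [this]
    · -- inf over j ≤ inf over i
      apply Finset.le_inf'
      intro i hi
      rw [mem_Icc] at hi
      obtain ⟨j, hj1, hjk, hbi1, hbi2⟩ := hblock i hi.1 hi.2
      refine le_trans (Finset.inf'_le _ (mem_Icc.mpr ⟨hj1, hjk⟩)) ?_
      rw [hratio j hj1 hjk i hbi1 hbi2]
      have hdj := hd2 j (mem_Icc.mpr ⟨hj1, hjk⟩)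
      have hst := hstep j hj1
      set M := h' j + 1 - i with hM
      have hM1 : 1 ≤ M := by omega
      have hMd : M ≤ d j - 1 := by omega
      have e1 : h' j + 2 - i = M + 1 := by omega
      rw [e1]
      have hMQ : (1 : ℚ) ≤ (M : ℚ) := by exact_mod_cast hM1
      have hMdQ : (M : ℚ) ≤ (d j : ℚ) - 1 := by
        have : (M : ℚ) ≤ ((d j - 1 : ℕ) : ℚ) := by exact_mod_cast hMd
        rwa [Nat.cast_sub (by omega : 1 ≤ d j)] at this
      have hdQ : (2 : ℚ) ≤ (d j : ℚ) := by exact_mod_cast hdj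
      rw [div_le_div_iff₀ (by linarith) (by linarith)]
      push_cast
      nlinarith
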